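/- For integers n ≥ 2 and 1 ≤ k ≤ n-1, the function h(x) = e^{2kx} ∑_{j=0}^n (-1)^{n-j}(n!/j!)(n+k)^{j-1}(n+k-j)x^j - ∑_{j=0}^n (-1)^{n-j}(n!/j!)(n-k)^{j-1}(n-k-j)x^j has exactly one nonzero real root c₁, and it satisfies -1 < c₁ < 0. -/

import Mathlib

set_option maxHeartbeats 1000000

open Finset Real

namespace S18

noncomputable def q (n : ℕ) (c : ℝ) (j : ℕ) : ℝ :=
  ((n.factorial : ℝ) / (j.factorial : ℝ)) * (c ^ j - j * c ^ (j - 1))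

noncomputable def P (n : ℕ) (c : ℝ) (y : ℝ) : ℝ := ∑ j ∈ range (n + 1), q n c j * y ^ j

noncomputable def S (n : ℕ) (c : ℝ) (x : ℝ) : ℝ :=
  ∑ j ∈ range (n + 1), (-1 : ℝ) ^ (n - j) * q n c j * x ^ j

noncomputable def G (n : ℕ) (c : ℝ) (x : ℝ) : ℝ :=
  ∑ j ∈ range (n + 1), (-1 : ℝ) ^ (n - j) * ((n.factorial : ℝ) / (j.factorial : ℝ)) * c ^ j * x ^ j

noncomputable def cc (n k : ℕ) (m : ℕ) : ℝ :=
  (∑ j ∈ range (n + 1),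
      if j ≤ m then q n ((n : ℝ) - k) j * (2 * k) ^ (m - j) / ((m - j).factorial : ℝ) else 0)
    - (if m ≤ n then q n ((n : ℝ) + k) m else 0)

noncomputable def gf (n k : ℕ) (y : ℝ) : ℝ :=
  Real.exp (2 * k * y) * P n ((n : ℝ) - k) y - P n ((n : ℝ) + k) y

/-- the statement's coefficient equals `q`-form -/
lemma coeff_eq (c : ℝ) (hc : c ≠ 0) (j : ℕ) :
    c ^ ((j : ℤ) - 1) * (c - j) = c ^ j - j * c ^ (j - 1) := by
  cases j with
  | zero =>
    norm_num
    exact inv_mul_cancel₀ hc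
  | succ i =>
    push_cast
    rw [show ((i : ℤ) + 1 - 1) = (i : ℤ) by ring, zpow_natCast]
    ring

lemma S_eq_neg_P (n : ℕ) (c : ℝ) (x : ℝ) : S n c x = (-1 : ℝ) ^ n * P n c (-x) := by
  rw [S, P, Finset.mul_sum]
  refine Finset.sum_congr rfl fun j hj => ?_
  have hjn : j ≤ n := by simpa [Nat.lt_succ_iff] using hj
  have : ((-1 : ℝ) ^ (n - j)) = (-1 : ℝ) ^ (n + j) := by
    rw [show n + j = (n - j) + 2 * j by omega, pow_add, pow_mul]
    norm_num
  rw [this, pow_add, neg_pow x]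
  ring

lemma G_zero (n : ℕ) (c : ℝ) : G n c 0 = (-1 : ℝ) ^ n * n.factorial := by
  rw [G, Finset.sum_eq_single 0]
  · simp
  · intro j _ hj
    simp [zero_pow hj]
  · simp

/-- S in terms of G -/
lemma S_eq_G (n : ℕ) (c : ℝ) (x : ℝ) :
    S n c x = (1 + x) * G n c x - c ^ n * x ^ (n + 1) := by
  have hfac : ∀ i : ℕ, ((i + 1).factorial : ℝ) = (i + 1) * (i.factorial : ℝ) := by
    intro i; rw [Nat.factorial_succ]; push_cast; ring
  have hxG : x * G n c x
      = (∑ j ∈ range n, (-1 : ℝ) ^ (n - j) * ((n.factorial : ℝ) / (j.factorial : ℝ)) * c ^ j * x ^ (j + 1))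
        + c ^ n * x ^ (n + 1) := by
    rw [G, Finset.mul_sum, Finset.sum_range_succ, Nat.sub_self, pow_zero, one_mul,
      div_self (by exact_mod_cast Nat.factorial_ne_zero n : (n.factorial : ℝ) ≠ 0), one_mul]
    congr 1
    · exact Finset.sum_congr rfl fun j _ => by ring
    · ring
  have hSG : S n c x - G n c x
      = ∑ j ∈ range n, (-1 : ℝ) ^ (n - j) * ((n.factorial : ℝ) / (j.factorial : ℝ)) * c ^ j * x ^ (j + 1) := by
    rw [S, G, ← Finset.sum_sub_distrib]
    have hL : ∀ j ∈ range (n + 1),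
        ((-1 : ℝ) ^ (n - j) * q n c j * x ^ j -
          (-1 : ℝ) ^ (n - j) * ((n.factorial : ℝ) / (j.factorial : ℝ)) * c ^ j * x ^ j)
        = -((-1 : ℝ) ^ (n - j) * ((n.factorial : ℝ) / (j.factorial : ℝ)) * ((j : ℝ) * c ^ (j - 1)) * x ^ j) := by
      intro j _
      rw [q]; ring
    rw [Finset.sum_congr rfl hL, Finset.sum_range_succ' _ n]
    simp only [Nat.cast_zero, zero_mul, mul_zero, neg_zero, add_zero]
    refine Finset.sum_congr rfl fun i hi => ?_
    have hin : i < n := by simpa using hi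
    have h3 : ((-1 : ℝ) ^ (n - (i + 1))) = -((-1 : ℝ) ^ (n - i)) := by
      have h1 : n - i = (n - (i + 1)) + 1 := by omega
      rw [h1, pow_succ]; ring
    have h4 : (i.factorial : ℝ) ≠ 0 := by exact_mod_cast Nat.factorial_ne_zero i
    have h5 : ((i : ℝ) + 1) ≠ 0 := by positivity
    rw [h3]
    simp only [Nat.add_sub_cancel, hfac i]
    push_cast
    field_simp
  have : S n c x = G n c x + (x * G n c x - c ^ n * x ^ (n + 1)) := by
    rw [hxG]
    have := hSG
    linarith
  rw [this]; ring

lemma hasDerivAt_G (n : ℕ) (c : ℝ) (x : ℝ) :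
    HasDerivAt (fun y => G n c y)
      (∑ j ∈ range (n + 1),
        (-1 : ℝ) ^ (n - j) * ((n.factorial : ℝ) / (j.factorial : ℝ)) * c ^ j * (j * x ^ (j - 1))) x := by
  have : ∀ j ∈ range (n + 1), HasDerivAt
      (fun y : ℝ => (-1 : ℝ) ^ (n - j) * ((n.factorial : ℝ) / (j.factorial : ℝ)) * c ^ j * y ^ j)
      ((-1 : ℝ) ^ (n - j) * ((n.factorial : ℝ) / (j.factorial : ℝ)) * c ^ j * (j * x ^ (j - 1))) x :=
    fun j _ => (hasDerivAt_pow j x).const_mul _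
  simpa [G] using HasDerivAt.fun_sum this

lemma Gd_eq (n : ℕ) (c : ℝ) (x : ℝ) :
    (∑ j ∈ range (n + 1),
        (-1 : ℝ) ^ (n - j) * ((n.factorial : ℝ) / (j.factorial : ℝ)) * c ^ j * (j * x ^ (j - 1)))
      = c ^ (n + 1) * x ^ n - c * G n c x := by
  have hfac : ∀ i : ℕ, ((i + 1).factorial : ℝ) = (i + 1) * (i.factorial : ℝ) := by
    intro i; rw [Nat.factorial_succ]; push_cast; ring
  rw [Finset.sum_range_succ' _ n]
  simp only [Nat.cast_zero, zero_mul, mul_zero, add_zero]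
  rw [G, Finset.sum_range_succ, Nat.sub_self, pow_zero, one_mul,
    div_self (by exact_mod_cast Nat.factorial_ne_zero n : (n.factorial : ℝ) ≠ 0), one_mul,
    mul_add]
  rw [show c * (c ^ n * x ^ n) = c ^ (n + 1) * x ^ n by ring]
  rw [show ∀ A B : ℝ, A = c ^ (n + 1) * x ^ n - (B + c ^ (n + 1) * x ^ n) ↔ A = -B from
    fun A B => by constructor <;> intro h <;> linarith]
  rw [Finset.mul_sum, ← Finset.sum_neg_distrib]
  refine Finset.sum_congr rfl fun i hi => ?_
  have hin : i < n := by simpa using hi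
  have h3 : ((-1 : ℝ) ^ (n - (i + 1))) = -((-1 : ℝ) ^ (n - i)) := by
    have h1 : n - i = (n - (i + 1)) + 1 := by omega
    rw [h1, pow_succ]; ring
  have h4 : (i.factorial : ℝ) ≠ 0 := by exact_mod_cast Nat.factorial_ne_zero i
  have h5 : ((i : ℝ) + 1) ≠ 0 := by positivity
  rw [h3]
  simp only [Nat.add_sub_cancel, hfac i]
  push_cast
  field_simp
  ring

lemma hasDerivAt_expG (n : ℕ) (c : ℝ) (x : ℝ) :
    HasDerivAt (fun y => Real.exp (c * y) * G n c y)
      (Real.exp (c * x) * (c ^ (n + 1) * x ^ n)) x := by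
  have h1 : HasDerivAt (fun y : ℝ => Real.exp (c * y)) (c * Real.exp (c * x)) x := by
    simpa [mul_comm] using ((hasDerivAt_id x).const_mul c).exp
  have h2 := (hasDerivAt_G n c x)
  have h3 := h1.fun_mul h2
  rw [Gd_eq] at h3
  refine h3.congr_deriv ?_
  ring

lemma ftc1 (n : ℕ) (c : ℝ) (x : ℝ) :
    ∫ t in (0 : ℝ)..x, Real.exp (c * t) * (c ^ (n + 1) * t ^ n)
      = Real.exp (c * x) * G n c x - (-1 : ℝ) ^ n * n.factorial := by
  have := intervalIntegral.integral_eq_sub_of_hasDerivAt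
    (f := fun y => Real.exp (c * y) * G n c y)
    (f' := fun t => Real.exp (c * t) * (c ^ (n + 1) * t ^ n))
    (fun t _ => hasDerivAt_expG n c t)
    (Continuous.intervalIntegrable (by fun_prop) 0 x)
  rw [this]
  rw [mul_zero, Real.exp_zero, one_mul, G_zero]

lemma ftc2 (n : ℕ) (c : ℝ) (x : ℝ) :
    ∫ t in (0 : ℝ)..x, Real.exp (c * t) * (((n : ℝ) + 1) * t ^ n + c * t ^ (n + 1))
      = x ^ (n + 1) * Real.exp (c * x) := by
  have h1 : ∀ y : ℝ, HasDerivAt (fun y : ℝ => Real.exp (c * y)) (c * Real.exp (c * y)) y := by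
    intro y
    simpa [mul_comm] using ((hasDerivAt_id y).const_mul c).exp
  have key : ∀ t : ℝ, HasDerivAt (fun y : ℝ => y ^ (n + 1) * Real.exp (c * y))
      (Real.exp (c * t) * (((n : ℝ) + 1) * t ^ n + c * t ^ (n + 1))) t := by
    intro t
    have := (hasDerivAt_pow (n + 1) t).fun_mul (h1 t)
    refine this.congr_deriv ?_
    push_cast [Nat.add_sub_cancel]
    ring
  have := intervalIntegral.integral_eq_sub_of_hasDerivAt
    (f := fun y => y ^ (n + 1) * Real.exp (c * y))
    (f' := fun t => Real.exp (c * t) * (((n : ℝ) + 1) * t ^ n + c * t ^ (n + 1)))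
    (fun t _ => key t)
    (Continuous.intervalIntegrable (by fun_prop) 0 x)
  rw [this]
  simp

noncomputable def Phi (n : ℕ) (A B x t : ℝ) : ℝ :=
  A ^ n * ((A - ((n : ℝ) + 1)) + A * (x - t)) * Real.exp (A * t)
    - B ^ n * ((B - ((n : ℝ) + 1)) + B * (x - t)) * Real.exp (B * t)

lemma exp_S_eq (n : ℕ) (c : ℝ) (x : ℝ) :
    Real.exp (c * x) * S n c x
      = (1 + x) * ((-1 : ℝ) ^ n * n.factorial
          + ∫ t in (0 : ℝ)..x, Real.exp (c * t) * (c ^ (n + 1) * t ^ n))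
        - c ^ n * ∫ t in (0 : ℝ)..x, Real.exp (c * t) * (((n : ℝ) + 1) * t ^ n + c * t ^ (n + 1)) := by
  rw [ftc1, ftc2, S_eq_G]
  ring

lemma repr_integral (n : ℕ) (A B x : ℝ) :
    Real.exp (A * x) * S n A x - Real.exp (B * x) * S n B x
      = ∫ t in (0 : ℝ)..x, t ^ n * Phi n A B x t := by
  rw [exp_S_eq n A x, exp_S_eq n B x]
  have hint : ∀ c : ℝ, IntervalIntegrable
      (fun t => Real.exp (c * t) * (c ^ (n + 1) * t ^ n)) MeasureTheory.volume 0 x :=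
    fun c => Continuous.intervalIntegrable (by fun_prop) 0 x
  have hint2 : ∀ c : ℝ, IntervalIntegrable
      (fun t => Real.exp (c * t) * (((n : ℝ) + 1) * t ^ n + c * t ^ (n + 1)))
      MeasureTheory.volume 0 x :=
    fun c => Continuous.intervalIntegrable (by fun_prop) 0 x
  have expand : ∀ t : ℝ, t ^ n * Phi n A B x t
      = ((1 + x) * (Real.exp (A * t) * (A ^ (n + 1) * t ^ n))
          - A ^ n * (Real.exp (A * t) * (((n : ℝ) + 1) * t ^ n + A * t ^ (n + 1))))
        - ((1 + x) * (Real.exp (B * t) * (B ^ (n + 1) * t ^ n))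
          - B ^ n * (Real.exp (B * t) * (((n : ℝ) + 1) * t ^ n + B * t ^ (n + 1)))) := by
    intro t
    rw [Phi]
    ring
  rw [intervalIntegral.integral_congr (g := fun t =>
      ((1 + x) * (Real.exp (A * t) * (A ^ (n + 1) * t ^ n))
          - A ^ n * (Real.exp (A * t) * (((n : ℝ) + 1) * t ^ n + A * t ^ (n + 1))))
        - ((1 + x) * (Real.exp (B * t) * (B ^ (n + 1) * t ^ n))
          - B ^ n * (Real.exp (B * t) * (((n : ℝ) + 1) * t ^ n + B * t ^ (n + 1)))))
    (fun t _ => expand t)]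
  rw [intervalIntegral.integral_sub (((hint A).const_mul _).sub ((hint2 A).const_mul _))
      (((hint B).const_mul _).sub ((hint2 B).const_mul _)),
    intervalIntegral.integral_sub ((hint A).const_mul _) ((hint2 A).const_mul _),
    intervalIntegral.integral_sub ((hint B).const_mul _) ((hint2 B).const_mul _),
    intervalIntegral.integral_const_mul, intervalIntegral.integral_const_mul,
    intervalIntegral.integral_const_mul, intervalIntegral.integral_const_mul]
  ring

lemma h_pos (n k : ℕ) (hk1 : 1 ≤ k) (hkn : k + 1 ≤ n) (x : ℝ) (hx : 0 < x) :
    0 < Real.exp (2 * k * x) * S n ((n : ℝ) + k) x - S n ((n : ℝ) - k) x := by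
  set A : ℝ := (n : ℝ) + k with hA
  set B : ℝ := (n : ℝ) - k with hB
  have hBone : (1 : ℝ) ≤ B := by
    rw [hB]
    have : (k : ℝ) + 1 ≤ (n : ℝ) := by exact_mod_cast hkn
    linarith
  have hk1' : (1 : ℝ) ≤ (k : ℝ) := by exact_mod_cast hk1
  have hBA : B ≤ A := by rw [hA, hB]; linarith
  have hApos : (0 : ℝ) < A := by linarith
  have hBpos : (0 : ℝ) < B := by linarith
  have key : 0 < ∫ t in (0 : ℝ)..x, t ^ n * Phi n A B x t := by
    apply intervalIntegral.intervalIntegral_pos_of_pos_on (Continuous.intervalIntegrable (by unfold Phi; fun_prop) 0 x) _ hx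
    intro t ht
    obtain ⟨ht0, htx⟩ := ht
    have hxt : 0 < x - t := by linarith
    have hA1 : 0 < (A - ((n : ℝ) + 1)) + A * (x - t) := by
      have : A - ((n : ℝ) + 1) = (k : ℝ) - 1 := by rw [hA]; ring
      rw [this]
      have : 0 < A * (x - t) := mul_pos hApos hxt
      linarith
    have hdiff : (B - ((n : ℝ) + 1)) + B * (x - t) < (A - ((n : ℝ) + 1)) + A * (x - t) := by
      have h1 : B - ((n : ℝ) + 1) < A - ((n : ℝ) + 1) := by rw [hA, hB]; linarith
      have h2 : B * (x - t) ≤ A * (x - t) := by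
        apply mul_le_mul_of_nonneg_right hBA (le_of_lt hxt)
      linarith
    have hexp : Real.exp (B * t) ≤ Real.exp (A * t) :=
      Real.exp_le_exp.mpr (mul_le_mul_of_nonneg_right hBA (le_of_lt ht0))
    have hpow : B ^ n ≤ A ^ n := pow_le_pow_left₀ (le_of_lt hBpos) hBA n
    have hPhi : 0 < Phi n A B x t := by
      rw [Phi]
      set A1 := (A - ((n : ℝ) + 1)) + A * (x - t)
      set B1 := (B - ((n : ℝ) + 1)) + B * (x - t)
      rcases le_or_gt B1 0 with hB1 | hB1
      · have h1 : 0 < A ^ n * A1 * Real.exp (A * t) :=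
          mul_pos (mul_pos (pow_pos hApos n) hA1) (Real.exp_pos _)
        have h2 : B ^ n * B1 * Real.exp (B * t) ≤ 0 := by
          apply mul_nonpos_of_nonpos_of_nonneg _ (le_of_lt (Real.exp_pos _))
          exact mul_nonpos_of_nonneg_of_nonpos (pow_nonneg (le_of_lt hBpos) n) hB1
        linarith
      · have c1 : B ^ n * B1 * Real.exp (B * t) ≤ A ^ n * B1 * Real.exp (B * t) := by
          apply mul_le_mul_of_nonneg_right (mul_le_mul_of_nonneg_right hpow (le_of_lt hB1))
            (le_of_lt (Real.exp_pos _))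
        have c2 : A ^ n * B1 * Real.exp (B * t) ≤ A ^ n * B1 * Real.exp (A * t) := by
          apply mul_le_mul_of_nonneg_left hexp
          exact mul_nonneg (pow_nonneg (le_of_lt hApos) n) (le_of_lt hB1)
        have c3 : A ^ n * B1 * Real.exp (A * t) < A ^ n * A1 * Real.exp (A * t) := by
          apply mul_lt_mul_of_pos_right _ (Real.exp_pos _)
          exact mul_lt_mul_of_pos_left hdiff (pow_pos hApos n)
        linarith
    exact mul_pos (pow_pos ht0 n) hPhi
  rw [← repr_integral] at key
  have hsplit : Real.exp (A * x) = Real.exp (B * x) * Real.exp (2 * k * x) := by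
    rw [← Real.exp_add]
    congr 1
    rw [hA, hB]; ring
  rw [hsplit] at key
  have : 0 < Real.exp (B * x) *
      (Real.exp (2 * k * x) * S n A x - S n B x) := by
    rw [mul_sub]
    convert key using 2
    ring
  have hepos : 0 < Real.exp (B * x) := Real.exp_pos _
  nlinarith [this, hepos]

lemma hasSum_exp (x : ℝ) : HasSum (fun m => x ^ m / (m.factorial : ℝ)) (Real.exp x) := by
  rw [Real.exp_eq_exp_ℝ]
  exact NormedSpace.expSeries_div_hasSum_exp x

lemma hasSum_exp_mul_poly (N : ℕ) (v : ℕ → ℝ) (β y : ℝ) :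
    HasSum (fun m => (∑ j ∈ range (N + 1),
        if j ≤ m then v j * β ^ (m - j) / ((m - j).factorial : ℝ) else 0) * y ^ m)
      (Real.exp (β * y) * ∑ j ∈ range (N + 1), v j * y ^ j) := by
  have main : ∀ j : ℕ, HasSum
      (fun m => (if j ≤ m then v j * β ^ (m - j) / ((m - j).factorial : ℝ) else 0) * y ^ m)
      (v j * y ^ j * Real.exp (β * y)) := by
    intro j
    have h1 := (hasSum_exp (β * y)).mul_left (v j * y ^ j)
    have hinj : Function.Injective (fun i : ℕ => i + j) := add_left_injective j
    have hvan : ∀ m, m ∉ Set.range (fun i : ℕ => i + j) →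
        (if j ≤ m then v j * β ^ (m - j) / ((m - j).factorial : ℝ) else 0) * y ^ m = 0 := by
      intro m hm
      rw [if_neg, zero_mul]
      intro hjm
      exact hm ⟨m - j, by simp only []; omega⟩
    have heq : (fun i => v j * y ^ j * ((β * y) ^ i / (i.factorial : ℝ)))
        = (fun m => (if j ≤ m then v j * β ^ (m - j) / ((m - j).factorial : ℝ) else 0) * y ^ m)
            ∘ (fun i : ℕ => i + j) := by
      funext i
      simp only [Function.comp_apply]
      rw [if_pos (by omega : j ≤ i + j), Nat.add_sub_cancel, mul_pow, pow_add]
      ring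
    rw [heq] at h1
    exact (Function.Injective.hasSum_iff hinj hvan).mp h1
  have htot := hasSum_sum (f := fun j m =>
      (if j ≤ m then v j * β ^ (m - j) / ((m - j).factorial : ℝ) else 0) * y ^ m)
    (s := range (N + 1)) (fun j _ => main j)
  convert htot using 1
  · funext m
    rw [Finset.sum_mul]
  · rw [← Finset.sum_mul]
    ring

lemma hasSum_gf (n k : ℕ) (y : ℝ) : HasSum (fun m => cc n k m * y ^ m) (gf n k y) := by
  have h1 := hasSum_exp_mul_poly n (fun j => q n ((n : ℝ) - k) j) (2 * k) y
  have h2 : HasSum (fun m => (if m ≤ n then q n ((n : ℝ) + k) m else 0) * y ^ m)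
      (P n ((n : ℝ) + k) y) := by
    have hvan : ∀ m ∉ range (n + 1),
        (if m ≤ n then q n ((n : ℝ) + k) m else 0) * y ^ m = 0 := by
      intro m hm
      rw [if_neg (by simpa [Nat.lt_succ_iff] using hm), zero_mul]
    have h3 : HasSum _ _ := hasSum_sum_of_ne_finset_zero hvan
    have : (∑ m ∈ range (n + 1), (if m ≤ n then q n ((n : ℝ) + k) m else 0) * y ^ m)
        = P n ((n : ℝ) + k) y := by
      rw [P]
      refine Finset.sum_congr rfl fun m hm => ?_
      rw [if_pos (by simpa [Nat.lt_succ_iff] using hm)]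
    rwa [this] at h3
  have := h1.sub h2
  have e : (fun m => (∑ j ∈ range (n + 1),
      if j ≤ m then q n ((n : ℝ) - k) j * (2 * k) ^ (m - j) / ((m - j).factorial : ℝ) else 0) * y ^ m
      - (if m ≤ n then q n ((n : ℝ) + k) m else 0) * y ^ m)
      = fun m => cc n k m * y ^ m := by
    funext m
    rw [cc, sub_mul]
  rw [e] at this
  exact this

lemma binom_conv (N m : ℕ) (hm : m ≤ N) (c d : ℝ) :
    (∑ j ∈ range (N + 1),
        if j ≤ m then c ^ j / (j.factorial : ℝ) * (d ^ (m - j) / ((m - j).factorial : ℝ)) else 0)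
      = (c + d) ^ m / (m.factorial : ℝ) := by
  have hsub : range (m + 1) ⊆ range (N + 1) := by
    intro x hx; simp only [Finset.mem_range] at *; omega
  have hvan : ∀ x ∈ range (N + 1), x ∉ range (m + 1) →
      (if x ≤ m then c ^ x / (x.factorial : ℝ) * (d ^ (m - x) / ((m - x).factorial : ℝ)) else 0) = 0 := by
    intro x _ hx
    rw [if_neg (by simpa [Nat.lt_succ_iff] using hx)]
  rw [← Finset.sum_subset hsub hvan]
  rw [Finset.sum_congr rfl (fun j hj => if_pos (by simpa [Nat.lt_succ_iff] using hj))]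
  rw [add_pow]
  rw [Finset.sum_div]
  refine Finset.sum_congr rfl fun j hj => ?_
  have hjm : j ≤ m := by simpa [Nat.lt_succ_iff] using hj
  rw [Nat.cast_choose ℝ hjm]
  have f1 : (j.factorial : ℝ) ≠ 0 := by exact_mod_cast Nat.factorial_ne_zero j
  have f2 : ((m - j).factorial : ℝ) ≠ 0 := by exact_mod_cast Nat.factorial_ne_zero (m - j)
  have f3 : (m.factorial : ℝ) ≠ 0 := by exact_mod_cast Nat.factorial_ne_zero m
  field_simp

lemma binom_conv_top (N : ℕ) (c d : ℝ) :
    (∑ j ∈ range (N + 1), c ^ j / (j.factorial : ℝ) * (d ^ (N + 1 - j) / ((N + 1 - j).factorial : ℝ)))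
      = ((c + d) ^ (N + 1) - c ^ (N + 1)) / ((N + 1).factorial : ℝ) := by
  have full : (∑ j ∈ range (N + 2), c ^ j / (j.factorial : ℝ) * (d ^ (N + 1 - j) / ((N + 1 - j).factorial : ℝ)))
      = (c + d) ^ (N + 1) / ((N + 1).factorial : ℝ) := by
    rw [add_pow, Finset.sum_div]
    refine Finset.sum_congr rfl fun j hj => ?_
    have hjm : j ≤ N + 1 := by simpa [Nat.lt_succ_iff] using hj
    rw [Nat.cast_choose ℝ hjm]
    have f1 : (j.factorial : ℝ) ≠ 0 := by exact_mod_cast Nat.factorial_ne_zero j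
    have f2 : ((N + 1 - j).factorial : ℝ) ≠ 0 := by exact_mod_cast Nat.factorial_ne_zero (N + 1 - j)
    have f3 : ((N + 1).factorial : ℝ) ≠ 0 := by exact_mod_cast Nat.factorial_ne_zero (N + 1)
    field_simp
  have split := Finset.sum_range_succ
    (fun j => c ^ j / (j.factorial : ℝ) * (d ^ (N + 1 - j) / ((N + 1 - j).factorial : ℝ))) (N + 1)
  rw [full] at split
  have last : c ^ (N + 1) / ((N + 1).factorial : ℝ) * (d ^ (N + 1 - (N + 1)) / ((N + 1 - (N + 1)).factorial : ℝ))
      = c ^ (N + 1) / ((N + 1).factorial : ℝ) := by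
    simp [Nat.sub_self]
  rw [last] at split
  have := split.symm
  field_simp at this ⊢
  linarith

lemma q_zero (n : ℕ) (c : ℝ) : q n c 0 = (n.factorial : ℝ) := by
  simp [q]

/-- split the convolution sum of `q`-coefficients into two binomial convolutions -/
lemma conv_split (n m : ℕ) (hm1 : 1 ≤ m) (B W : ℝ) :
    (∑ j ∈ range (n + 1), if j ≤ m then q n B j * W ^ (m - j) / ((m - j).factorial : ℝ) else 0)
    = (n.factorial : ℝ) * (∑ j ∈ range (n + 1),
        if j ≤ m then B ^ j / (j.factorial : ℝ) * (W ^ (m - j) / ((m - j).factorial : ℝ)) else 0)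
      - (n.factorial : ℝ) * (∑ i ∈ range n,
        if i ≤ m - 1 then B ^ i / (i.factorial : ℝ) * (W ^ (m - 1 - i) / ((m - 1 - i).factorial : ℝ)) else 0) := by
  have step1 : ∀ j ∈ range (n + 1),
      (if j ≤ m then q n B j * W ^ (m - j) / ((m - j).factorial : ℝ) else 0)
      = (if j ≤ m then (n.factorial : ℝ) * (B ^ j / (j.factorial : ℝ) * (W ^ (m - j) / ((m - j).factorial : ℝ))) else 0)
        - (if 1 ≤ j ∧ j ≤ m then
            (n.factorial : ℝ) * (B ^ (j - 1) / ((j - 1).factorial : ℝ) * (W ^ (m - j) / ((m - j).factorial : ℝ))) else 0) := by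
    intro j _
    rcases le_or_gt j m with hj | hj
    · rw [if_pos hj, if_pos hj]
      rcases Nat.eq_zero_or_pos j with h0 | h0
      · subst h0
        rw [q_zero, if_neg (by omega : ¬ (1 ≤ 0 ∧ 0 ≤ m))]
        simp
        ring
      · rw [if_pos (by omega : 1 ≤ j ∧ j ≤ m)]
        have hfac : (j.factorial : ℝ) = j * ((j - 1).factorial : ℝ) := by
          rw [← Nat.mul_factorial_pred h0.ne']; push_cast; ring
        have f2 : ((j - 1).factorial : ℝ) ≠ 0 := by exact_mod_cast Nat.factorial_ne_zero (j - 1)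
        have f4 : ((m - j).factorial : ℝ) ≠ 0 := by exact_mod_cast Nat.factorial_ne_zero (m - j)
        have hj' : (j : ℝ) ≠ 0 := by
          have : 0 < j := h0
          positivity
        rw [q, hfac]
        field_simp
    · rw [if_neg (by omega), if_neg (by omega), if_neg (by omega)]
      ring
  rw [Finset.sum_congr rfl step1, Finset.sum_sub_distrib, Finset.mul_sum, Finset.mul_sum]
  congr 1
  · refine Finset.sum_congr rfl fun j _ => ?_
    rcases le_or_gt j m with hj | hj
    · rw [if_pos hj, if_pos hj]
    · rw [if_neg (by omega), if_neg (by omega), mul_zero]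
  -- second sum : peel j = 0 and reindex
  · rw [Finset.sum_range_succ' _ n, if_neg (by omega : ¬ (1 ≤ 0 ∧ 0 ≤ m)), add_zero]
    refine Finset.sum_congr rfl fun i _ => ?_
    rcases le_or_gt (i + 1) m with hi | hi
    · rw [if_pos (by omega : 1 ≤ i + 1 ∧ i + 1 ≤ m), if_pos (by omega : i ≤ m - 1)]
      rw [show m - (i + 1) = m - 1 - i from by omega, Nat.add_sub_cancel]
    · rw [if_neg (by omega), if_neg (by omega), mul_zero]

lemma cc_low (n k m : ℕ) (hm : m ≤ n) : cc n k m = 0 := by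
  rcases Nat.eq_zero_or_pos m with h0 | h0
  · subst h0
    rw [cc, if_pos (by omega : 0 ≤ n)]
    rw [Finset.sum_eq_single_of_mem 0 (by simp)]
    · simp [q_zero]
    · intro j _ hj
      rw [if_neg (by omega)]
  · have hn1 : 1 ≤ n := le_trans h0 hm
    rw [cc, conv_split n m h0, if_pos hm]
    rw [binom_conv n m hm]
    have hrange : range n = range ((n - 1) + 1) := by congr 1; omega
    rw [hrange, binom_conv (n - 1) (m - 1) (by omega)]
    have hBW : ((n : ℝ) - k) + 2 * k = (n : ℝ) + k := by ring
    rw [hBW, q]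
    set A : ℝ := (n : ℝ) + k
    have hfac : (m.factorial : ℝ) = m * ((m - 1).factorial : ℝ) := by
      rw [← Nat.mul_factorial_pred h0.ne']; push_cast; ring
    have hA : A ^ m = A ^ (m - 1) * A := by
      rw [← pow_succ, show m - 1 + 1 = m from by omega]
    have f1 : (m.factorial : ℝ) ≠ 0 := by exact_mod_cast Nat.factorial_ne_zero m
    have f2 : ((m - 1).factorial : ℝ) ≠ 0 := by exact_mod_cast Nat.factorial_ne_zero (m - 1)
    have hm' : (m : ℝ) ≠ 0 := by positivity
    rw [hA, hfac]
    field_simp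
    ring

lemma cc_high (n k m : ℕ) (hm : n + 1 ≤ m) :
    cc n k m = ∑ j ∈ range (n + 1), q n ((n : ℝ) - k) j * (2 * k) ^ (m - j) / ((m - j).factorial : ℝ) := by
  rw [cc, if_neg (by omega), sub_zero]
  refine Finset.sum_congr rfl fun j hj => ?_
  rw [if_pos]
  have : j < n + 1 := by simpa using hj
  omega

lemma cc_top (n k : ℕ) (hn : 1 ≤ n) :
    cc n k (n + 1)
      = (n.factorial : ℝ) * ((((n : ℝ) + k) ^ (n + 1) - ((n : ℝ) - k) ^ (n + 1)) / (((n + 1).factorial : ℝ)))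
        - ((((n : ℝ) + k) ^ n - ((n : ℝ) - k) ^ n)) := by
  rw [cc, if_neg (by omega), sub_zero, conv_split n (n + 1) (by omega)]
  have e1 : (∑ j ∈ range (n + 1),
      if j ≤ n + 1 then ((n : ℝ) - k) ^ j / (j.factorial : ℝ) * ((2 * (k : ℝ)) ^ (n + 1 - j) / ((n + 1 - j).factorial : ℝ)) else 0)
      = ∑ j ∈ range (n + 1), ((n : ℝ) - k) ^ j / (j.factorial : ℝ) * ((2 * (k : ℝ)) ^ (n + 1 - j) / ((n + 1 - j).factorial : ℝ)) := by
    refine Finset.sum_congr rfl fun j hj => ?_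
    rw [if_pos]
    have : j < n + 1 := by simpa using hj
    omega
  have e2 : (∑ i ∈ range n,
      if i ≤ n + 1 - 1 then ((n : ℝ) - k) ^ i / (i.factorial : ℝ) * ((2 * (k : ℝ)) ^ (n + 1 - 1 - i) / ((n + 1 - 1 - i).factorial : ℝ)) else 0)
      = ∑ i ∈ range n, ((n : ℝ) - k) ^ i / (i.factorial : ℝ) * ((2 * (k : ℝ)) ^ (n - i) / ((n - i).factorial : ℝ)) := by
    refine Finset.sum_congr rfl fun i hi => ?_
    have hi' : i < n := by simpa using hi
    rw [if_pos (by omega), show n + 1 - 1 - i = n - i from by omega]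
  rw [e1, e2, binom_conv_top n ((n : ℝ) - k) (2 * k)]
  have hrange : range n = range ((n - 1) + 1) := by congr 1; omega
  rw [hrange]
  have e3 : ∀ j ∈ range ((n - 1) + 1),
      ((n : ℝ) - k) ^ j / (j.factorial : ℝ) * ((2 * (k : ℝ)) ^ (n - j) / ((n - j).factorial : ℝ))
      = ((n : ℝ) - k) ^ j / (j.factorial : ℝ) * ((2 * (k : ℝ)) ^ ((n - 1) + 1 - j) / (((n - 1) + 1 - j).factorial : ℝ)) := by
    intro j hj
    rw [show (n - 1) + 1 - j = n - j from by omega]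
  rw [Finset.sum_congr rfl e3, binom_conv_top (n - 1) ((n : ℝ) - k) (2 * k)]
  have hBW : ((n : ℝ) - k) + 2 * k = (n : ℝ) + k := by ring
  rw [hBW, show (n - 1) + 1 = n from by omega]
  have f3 : (n.factorial : ℝ) ≠ 0 := by exact_mod_cast Nat.factorial_ne_zero n
  field_simp

lemma cc_top_pos (n k : ℕ) (hk1 : 1 ≤ k) (hkn : k + 1 ≤ n) : 0 < cc n k (n + 1) := by
  rw [cc_top n k (by omega)]
  set A : ℝ := (n : ℝ) + k with hA
  set B : ℝ := (n : ℝ) - k with hB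
  have hk1' : (1 : ℝ) ≤ (k : ℝ) := by exact_mod_cast hk1
  have hBone : (1 : ℝ) ≤ B := by
    rw [hB]
    have : (k : ℝ) + 1 ≤ (n : ℝ) := by exact_mod_cast hkn
    linarith
  have hApos : (0 : ℝ) < A := by rw [hA]; positivity
  have hfacs : ((n + 1).factorial : ℝ) = (n + 1) * (n.factorial : ℝ) := by
    rw [Nat.factorial_succ]; push_cast; ring
  have f3 : (n.factorial : ℝ) ≠ 0 := by exact_mod_cast Nat.factorial_ne_zero n
  have hn1 : (0 : ℝ) < (n : ℝ) + 1 := by positivity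
  rw [hfacs]
  have key : (n + 1 : ℝ) * (A ^ n - B ^ n) < A ^ (n + 1) - B ^ (n + 1) := by
    have e1 : A ^ (n + 1) = A ^ n * A := by rw [pow_succ]
    have e2 : B ^ (n + 1) = B ^ n * B := by rw [pow_succ]
    have hAn : (0 : ℝ) < A ^ n := pow_pos hApos n
    have hBn : (0 : ℝ) < B ^ n := pow_pos (by linarith) n
    have hAk : A - ((n : ℝ) + 1) = (k : ℝ) - 1 := by rw [hA]; ring
    have hBk : B - ((n : ℝ) + 1) = -((k : ℝ) + 1) := by rw [hB]; ring
    nlinarith [mul_nonneg (le_of_lt hAn) (by linarith : (0:ℝ) ≤ (k:ℝ) - 1),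
      mul_pos hBn (by linarith : (0:ℝ) < (k:ℝ) + 1)]
  rw [div_eq_mul_inv, sub_pos]
  rw [show (n.factorial : ℝ) * ((A ^ (n + 1) - B ^ (n + 1)) * (((n : ℝ) + 1) * (n.factorial : ℝ))⁻¹)
      = (A ^ (n + 1) - B ^ (n + 1)) / ((n : ℝ) + 1) from by field_simp]
  rw [lt_div_iff₀ hn1]
  linarith

lemma q_nonneg (n k j : ℕ) (hkn : k + 1 ≤ n) (hj : j + k ≤ n) : 0 ≤ q n ((n : ℝ) - k) j := by
  rcases Nat.eq_zero_or_pos j with h0 | h0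
  · subst h0; rw [q_zero]; positivity
  · rw [q]
    have hB : (j : ℝ) ≤ (n : ℝ) - k := by
      have : (j : ℝ) + k ≤ (n : ℝ) := by exact_mod_cast hj
      linarith
    have hBpos : (0 : ℝ) < (n : ℝ) - k := by
      have h0' : (0 : ℝ) < (j : ℝ) := by exact_mod_cast h0
      linarith
    have e : ((n : ℝ) - k) ^ j = ((n : ℝ) - k) ^ (j - 1) * ((n : ℝ) - k) := by
      rw [← pow_succ, show j - 1 + 1 = j from by omega]
    apply mul_nonneg (by positivity)
    rw [e]
    have := pow_nonneg (le_of_lt hBpos) (j - 1)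
    nlinarith

lemma q_nonpos (n k j : ℕ) (hkn : k + 1 ≤ n) (hj : n ≤ j + k) : q n ((n : ℝ) - k) j ≤ 0 := by
  have h0 : 0 < j := by omega
  rw [q]
  have hB : (n : ℝ) - k ≤ (j : ℝ) := by
    have : (n : ℝ) ≤ (j : ℝ) + k := by exact_mod_cast hj
    linarith
  have hBpos : (0 : ℝ) ≤ (n : ℝ) - k := by
    have : (k : ℝ) + 1 ≤ (n : ℝ) := by exact_mod_cast hkn
    linarith
  have e : ((n : ℝ) - k) ^ j = ((n : ℝ) - k) ^ (j - 1) * ((n : ℝ) - k) := by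
    rw [← pow_succ, show j - 1 + 1 = j from by omega]
  apply mul_nonpos_of_nonneg_of_nonpos (by positivity)
  rw [e]
  have := pow_nonneg hBpos (j - 1)
  nlinarith

lemma cc_prop (n k : ℕ) (hk1 : 1 ≤ k) (hkn : k + 1 ≤ n) :
    ∀ m, n + 1 ≤ m → cc n k m ≤ 0 → cc n k (m + 1) ≤ 0 := by
  intro m hm hneg
  rw [cc_high n k (m + 1) (by omega)]
  rw [cc_high n k m hm] at hneg
  set lam : ℝ := 2 * (k : ℝ) / ((m : ℝ) + 1 - ((n - k : ℕ) : ℝ)) with hlam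
  have hnk : ((n - k : ℕ) : ℝ) = (n : ℝ) - k := by
    push_cast [Nat.cast_sub (by omega : k ≤ n)]
    ring
  have hden : (0 : ℝ) < (m : ℝ) + 1 - ((n - k : ℕ) : ℝ) := by
    rw [hnk]
    have h1 : (n : ℝ) ≤ (m : ℝ) := by exact_mod_cast le_trans (by omega) hm
    have h2 : (0 : ℝ) ≤ (k : ℝ) := by positivity
    linarith
  have hlampos : 0 < lam := by
    rw [hlam]
    have : (0 : ℝ) < 2 * k := by
      have : (1 : ℝ) ≤ (k : ℝ) := by exact_mod_cast hk1
      linarith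
    positivity
  have key : (∑ j ∈ range (n + 1),
      q n ((n : ℝ) - k) j * (2 * k) ^ (m + 1 - j) / ((m + 1 - j).factorial : ℝ))
      ≤ lam * ∑ j ∈ range (n + 1),
        q n ((n : ℝ) - k) j * (2 * k) ^ (m - j) / ((m - j).factorial : ℝ) := by
    rw [Finset.mul_sum]
    apply Finset.sum_le_sum
    intro j hj
    have hjn : j ≤ n := by simpa [Nat.lt_succ_iff] using hj
    have hjm : j ≤ m := by omega
    have hexp : (2 * (k : ℝ)) ^ (m + 1 - j) = 2 * k * (2 * (k : ℝ)) ^ (m - j) := by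
      rw [show m + 1 - j = (m - j) + 1 from by omega, pow_succ]
      ring
    have hfac : ((m + 1 - j).factorial : ℝ) = ((m : ℝ) + 1 - j) * ((m - j).factorial : ℝ) := by
      rw [show m + 1 - j = (m - j) + 1 from by omega, Nat.factorial_succ]
      push_cast [Nat.cast_sub hjm]
      ring
    have hdenj : (0 : ℝ) < (m : ℝ) + 1 - (j : ℝ) := by
      have : (j : ℝ) ≤ (m : ℝ) := by exact_mod_cast hjm
      linarith
    have hfj : (0 : ℝ) < ((m - j).factorial : ℝ) := by exact_mod_cast Nat.factorial_pos (m - j)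
    rw [hexp, hfac]
    rw [show q n ((n : ℝ) - k) j * (2 * k * (2 * (k : ℝ)) ^ (m - j)) / (((m : ℝ) + 1 - j) * ((m - j).factorial : ℝ))
        = (2 * (k : ℝ) / ((m : ℝ) + 1 - j)) * (q n ((n : ℝ) - k) j * (2 * (k : ℝ)) ^ (m - j) / ((m - j).factorial : ℝ))
      from by field_simp]
    rcases le_or_gt (j + k) n with hsign | hsign
    · -- q ≥ 0, and 2k/(m+1-j) ≤ lam
      have hq : 0 ≤ q n ((n : ℝ) - k) j := q_nonneg n k j hkn hsign
      have hT : 0 ≤ q n ((n : ℝ) - k) j * (2 * (k : ℝ)) ^ (m - j) / ((m - j).factorial : ℝ) := by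
        apply div_nonneg _ (le_of_lt hfj)
        apply mul_nonneg hq (by positivity)
      apply mul_le_mul_of_nonneg_right _ hT
      rw [hlam]
      apply div_le_div_of_nonneg_left (by positivity) hden
      rw [hnk]
      have : (j : ℝ) + k ≤ (n : ℝ) := by exact_mod_cast hsign
      linarith
    · -- q ≤ 0, and lam ≤ 2k/(m+1-j)
      have hq : q n ((n : ℝ) - k) j ≤ 0 := q_nonpos n k j hkn (by omega)
      have hT : q n ((n : ℝ) - k) j * (2 * (k : ℝ)) ^ (m - j) / ((m - j).factorial : ℝ) ≤ 0 := by
        apply div_nonpos_of_nonpos_of_nonneg _ (le_of_lt hfj)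
        apply mul_nonpos_of_nonpos_of_nonneg hq (by positivity)
      apply mul_le_mul_of_nonpos_right _ hT
      rw [hlam]
      apply div_le_div_of_nonneg_left (by positivity) hdenj
      rw [hnk]
      have : (n : ℝ) ≤ (j : ℝ) + k := by exact_mod_cast (le_of_lt hsign)
      linarith
  calc (∑ j ∈ range (n + 1),
      q n ((n : ℝ) - k) j * (2 * k) ^ (m + 1 - j) / ((m + 1 - j).factorial : ℝ))
      ≤ lam * ∑ j ∈ range (n + 1),
        q n ((n : ℝ) - k) j * (2 * k) ^ (m - j) / ((m - j).factorial : ℝ) := key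
    _ ≤ 0 := mul_nonpos_of_nonneg_of_nonpos (le_of_lt hlampos) hneg

lemma P_one (n : ℕ) (c : ℝ) : P n c 1 = c ^ n := by
  rw [P]
  simp only [one_pow, mul_one]
  rw [Finset.sum_range_succ' _ n, q_zero]
  have e : ∀ i ∈ range n, q n c (i + 1)
      = (n.factorial : ℝ) / ((i + 1).factorial : ℝ) * c ^ (i + 1)
        - (n.factorial : ℝ) / (i.factorial : ℝ) * c ^ i := by
    intro i _
    rw [q, Nat.add_sub_cancel]
    have hfac : ((i + 1).factorial : ℝ) = (i + 1) * (i.factorial : ℝ) := by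
      rw [Nat.factorial_succ]; push_cast; ring
    have f1 : (i.factorial : ℝ) ≠ 0 := by exact_mod_cast Nat.factorial_ne_zero i
    have f2 : ((i : ℝ) + 1) ≠ 0 := by positivity
    rw [hfac]
    field_simp
    push_cast; ring
  rw [Finset.sum_congr rfl e, Finset.sum_range_sub (fun i => (n.factorial : ℝ) / (i.factorial : ℝ) * c ^ i)]
  have f3 : (n.factorial : ℝ) ≠ 0 := by exact_mod_cast Nat.factorial_ne_zero n
  field_simp
  simp

lemma exp_ineq (t : ℝ) (h0 : 0 < t) (h1 : t < 1) : (1 - t) * Real.exp (2 * t) < 1 + t := by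
  set F : ℝ → ℝ := fun s => (1 + s) * Real.exp (-s) - (1 - s) * Real.exp s with hF
  have hderiv : ∀ s : ℝ, HasDerivAt F (s * (Real.exp s - Real.exp (-s))) s := by
    intro s
    have h1' : HasDerivAt (fun s : ℝ => Real.exp (-s)) (-Real.exp (-s)) s := by
      simpa [Function.comp_def] using (Real.hasDerivAt_exp (-s)).comp s ((hasDerivAt_id s).neg)
    have h2' : HasDerivAt (fun s : ℝ => (1 + s) * Real.exp (-s))
        (Real.exp (-s) + (1 + s) * (-Real.exp (-s))) s := by
      simpa using (((hasDerivAt_id s).const_add 1).fun_mul h1')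
    have h3' : HasDerivAt (fun s : ℝ => (1 - s) * Real.exp s)
        ((-1) * Real.exp s + (1 - s) * Real.exp s) s := by
      exact (((hasDerivAt_id s).neg.const_add 1).mul (Real.hasDerivAt_exp s))
    have := h2'.fun_sub h3'
    refine this.congr_deriv ?_
    ring
  have hmono : StrictMonoOn F (Set.Icc 0 1) := by
    apply strictMonoOn_of_deriv_pos (convex_Icc (0:ℝ) 1)
    · apply Continuous.continuousOn
      rw [hF]
      fun_prop
    · intro s hs
      rw [interior_Icc] at hs
      rw [(hderiv s).deriv]
      have hs0 : 0 < s := hs.1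
      have : Real.exp (-s) < Real.exp s := Real.exp_lt_exp.mpr (by linarith)
      have : 0 < Real.exp s - Real.exp (-s) := by linarith
      positivity
  have hFt : F 0 < F t :=
    hmono (Set.mem_Icc.mpr ⟨le_refl 0, by norm_num⟩)
      (Set.mem_Icc.mpr ⟨le_of_lt h0, le_of_lt h1⟩) h0
  have hF0 : F 0 = 0 := by rw [hF]; simp
  rw [hF0, hF] at hFt
  simp only [sub_pos] at hFt
  -- (1 - t) * exp t < (1 + t) * exp (-t); multiply by exp t
  have het : 0 < Real.exp t := Real.exp_pos t
  have := mul_lt_mul_of_pos_right hFt het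
  rw [show (1 + t) * Real.exp (-t) * Real.exp t = 1 + t from by
      rw [mul_assoc, ← Real.exp_add]; simp] at this
  rw [show (1 - t) * Real.exp t * Real.exp t = (1 - t) * Real.exp (2 * t) from by
      rw [mul_assoc, ← Real.exp_add]; ring_nf] at this
  exact this

lemma gf_one_neg (n k : ℕ) (hk1 : 1 ≤ k) (hkn : k + 1 ≤ n) : gf n k 1 < 0 := by
  rw [gf, P_one, P_one, mul_one]
  set t : ℝ := (k : ℝ) / n with ht
  have hn0 : (0 : ℝ) < (n : ℝ) := by
    have : (1 : ℕ) ≤ n := by omega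
    exact_mod_cast Nat.lt_of_lt_of_le Nat.zero_lt_one this
  have hk' : (1 : ℝ) ≤ (k : ℝ) := by exact_mod_cast hk1
  have hkn' : (k : ℝ) + 1 ≤ (n : ℝ) := by exact_mod_cast hkn
  have ht0 : 0 < t := by rw [ht]; positivity
  have ht1 : t < 1 := by
    rw [ht, div_lt_one hn0]
    linarith
  have hmain := exp_ineq t ht0 ht1
  have hbase : 0 ≤ (1 - t) * Real.exp (2 * t) := by
    have : 0 ≤ 1 - t := by linarith
    positivity
  have hpow := pow_lt_pow_left₀ hmain hbase (by omega : n ≠ 0)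
  have hexpn : (Real.exp (2 * t)) ^ n = Real.exp (2 * (k : ℝ)) := by
    rw [← Real.exp_nat_mul]
    congr 1
    rw [ht]
    field_simp
  rw [mul_pow, hexpn] at hpow
  -- multiply by n^n
  have hnn : (0 : ℝ) < (n : ℝ) ^ n := by positivity
  have := mul_lt_mul_of_pos_left hpow hnn
  rw [show ((n : ℝ) ^ n * ((1 - t) ^ n * Real.exp (2 * (k : ℝ))))
      = ((n : ℝ) * (1 - t)) ^ n * Real.exp (2 * (k : ℝ)) from by rw [mul_pow]; ring,
    show ((n : ℝ) ^ n * (1 + t) ^ n) = ((n : ℝ) * (1 + t)) ^ n from by rw [mul_pow]] at this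
  have e1 : (n : ℝ) * (1 - t) = (n : ℝ) - k := by
    rw [ht]; field_simp
  have e2 : (n : ℝ) * (1 + t) = (n : ℝ) + k := by
    rw [ht]; field_simp
  rw [e1, e2] at this
  have : ((n : ℝ) - k) ^ n * Real.exp (2 * (k : ℝ)) < ((n : ℝ) + k) ^ n := this
  linarith

lemma summable_abs_cc (n k : ℕ) : Summable (fun m => |cc n k m|) := by
  have h1 := hasSum_exp_mul_poly n (fun j => |q n ((n : ℝ) - k) j|) (2 * k) 1
  have hs1 : Summable (fun m => ∑ j ∈ range (n + 1),
      if j ≤ m then |q n ((n : ℝ) - k) j| * (2 * (k : ℝ)) ^ (m - j) / ((m - j).factorial : ℝ) else 0) := by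
    have := h1.summable
    simpa using this
  have hs2 : Summable (fun m => if m ≤ n then |q n ((n : ℝ) + k) m| else 0) := by
    apply summable_of_ne_finset_zero (s := range (n + 1))
    intro m hm
    rw [if_neg (by simpa [Nat.lt_succ_iff] using hm)]
  apply Summable.of_nonneg_of_le (fun m => abs_nonneg _) _ (hs1.add hs2)
  intro m
  rw [cc]
  apply le_trans (abs_sub _ _)
  gcongr
  · apply le_trans (Finset.abs_sum_le_sum_abs _ _)
    apply Finset.sum_le_sum
    intro j _
    rcases le_or_gt j m with hj | hj
    · rw [if_pos hj, if_pos hj, abs_div, abs_mul]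
      rw [abs_of_nonneg (by positivity : (0:ℝ) ≤ (2 * (k:ℝ)) ^ (m - j)),
        abs_of_nonneg (by positivity : (0:ℝ) ≤ ((m - j).factorial : ℝ))]
    · rw [if_neg (by omega), if_neg (by omega), abs_zero]
  · rcases le_or_gt m n with hm | hm
    · rw [if_pos hm, if_pos hm]
    · rw [if_neg (by omega), if_neg (by omega), abs_zero]

lemma gf_pos_small (n k : ℕ) (hn : 2 ≤ n) (hk1 : 1 ≤ k) (hkn : k + 1 ≤ n) :
    ∃ y₀ : ℝ, 0 < y₀ ∧ y₀ < 1 ∧ 0 < gf n k y₀ := by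
  have hCs : Summable (fun i => |cc n k (i + (n + 2))|) :=
    (summable_abs_cc n k).comp_injective (add_left_injective (n + 2))
  set C : ℝ := ∑' i, |cc n k (i + (n + 2))| with hC
  have hC0 : 0 ≤ C := tsum_nonneg fun i => abs_nonneg _
  set ε : ℝ := cc n k (n + 1) with hε
  have hεpos : 0 < ε := cc_top_pos n k hk1 hkn
  set y₀ : ℝ := min (1 / 2) (ε / (2 * (C + 1))) with hy₀
  have hy₀pos : 0 < y₀ := by
    apply lt_min (by norm_num)
    positivity
  have hy₀1 : y₀ < 1 := lt_of_le_of_lt (min_le_left _ _) (by norm_num)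
  have hy₀le : y₀ ≤ 1 := le_of_lt hy₀1
  refine ⟨y₀, hy₀pos, hy₀1, ?_⟩
  have h := hasSum_gf n k y₀
  have hsum0 : (∑ m ∈ range (n + 2), cc n k m * y₀ ^ m) = ε * y₀ ^ (n + 1) := by
    rw [Finset.sum_range_succ]
    rw [Finset.sum_eq_zero fun m hm => by
      rw [cc_low n k m (by simpa [Nat.lt_succ_iff] using hm), zero_mul]]
    rw [zero_add, hε]
  have h' : HasSum (fun m => cc n k m * y₀ ^ m)
      ((gf n k y₀ - ε * y₀ ^ (n + 1)) + ∑ m ∈ range (n + 2), cc n k m * y₀ ^ m) := by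
    rw [hsum0]; simpa using h
  have htail : HasSum (fun i => cc n k (i + (n + 2)) * y₀ ^ (i + (n + 2)))
      (gf n k y₀ - ε * y₀ ^ (n + 1)) :=
    (hasSum_nat_add_iff (n + 2)).mpr h'
  have habs : Summable (fun i => |cc n k (i + (n + 2)) * y₀ ^ (i + (n + 2))|) := by
    apply Summable.of_nonneg_of_le (fun i => abs_nonneg _) _ (hCs.mul_left (y₀ ^ (n + 2)))
    intro i
    rw [abs_mul, abs_of_nonneg (by positivity : (0:ℝ) ≤ y₀ ^ (i + (n + 2)))]
    rw [show i + (n + 2) = (n + 2) + i from by omega, pow_add]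
    have h1 : y₀ ^ i ≤ 1 := pow_le_one₀ (le_of_lt hy₀pos) hy₀le
    nlinarith [abs_nonneg (cc n k (n + 2 + i)), pow_nonneg (le_of_lt hy₀pos) (n + 2),
      pow_nonneg (le_of_lt hy₀pos) i,
      mul_nonneg (mul_nonneg (pow_nonneg (le_of_lt hy₀pos) (n + 2)) (sub_nonneg.mpr h1))
        (abs_nonneg (cc n k (n + 2 + i)))]
  have hbound : |gf n k y₀ - ε * y₀ ^ (n + 1)| ≤ y₀ ^ (n + 2) * C := by
    rw [← htail.tsum_eq]
    have hnorm : |∑' i, cc n k (i + (n + 2)) * y₀ ^ (i + (n + 2))|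
        ≤ ∑' i, |cc n k (i + (n + 2)) * y₀ ^ (i + (n + 2))| := by
      have := norm_tsum_le_tsum_norm (f := fun i => cc n k (i + (n + 2)) * y₀ ^ (i + (n + 2)))
        (by simpa [abs_mul, abs_pow] using habs)
      simpa [abs_mul, abs_pow] using this
    apply le_trans hnorm
    rw [hC, ← tsum_mul_left]
    apply Summable.tsum_le_tsum _ habs (hCs.mul_left (y₀ ^ (n + 2)))
    intro i
    rw [abs_mul, abs_of_nonneg (by positivity : (0:ℝ) ≤ y₀ ^ (i + (n + 2)))]
    rw [show i + (n + 2) = (n + 2) + i from by omega, pow_add]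
    have h1 : y₀ ^ i ≤ 1 := pow_le_one₀ (le_of_lt hy₀pos) hy₀le
    nlinarith [abs_nonneg (cc n k (n + 2 + i)), pow_nonneg (le_of_lt hy₀pos) (n + 2),
      pow_nonneg (le_of_lt hy₀pos) i,
      mul_nonneg (mul_nonneg (pow_nonneg (le_of_lt hy₀pos) (n + 2)) (sub_nonneg.mpr h1))
        (abs_nonneg (cc n k (n + 2 + i)))]
  have hsmall : y₀ * C < ε := by
    have h1 : y₀ ≤ ε / (2 * (C + 1)) := min_le_right _ _
    have h2 : y₀ * C ≤ (ε / (2 * (C + 1))) * C := by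
      apply mul_le_mul_of_nonneg_right h1 hC0
    have h3 : (ε / (2 * (C + 1))) * C < ε := by
      rw [div_mul_eq_mul_div, div_lt_iff₀ (by positivity)]
      nlinarith
    linarith
  have habs' : gf n k y₀ ≥ ε * y₀ ^ (n + 1) - y₀ ^ (n + 2) * C := by
    have := abs_le.mp hbound
    linarith [this.1]
  have : ε * y₀ ^ (n + 1) - y₀ ^ (n + 2) * C = y₀ ^ (n + 1) * (ε - y₀ * C) := by
    rw [pow_succ]; ring
  rw [this] at habs'
  have : 0 < y₀ ^ (n + 1) * (ε - y₀ * C) := by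
    apply mul_pos (by positivity)
    linarith
  linarith

lemma continuous_gf (n k : ℕ) : Continuous (gf n k) := by
  have hP : ∀ c : ℝ, Continuous (P n c) := by
    intro c
    unfold P
    apply continuous_finset_sum
    intro j _
    fun_prop
  unfold gf
  exact ((Real.continuous_exp.comp (by fun_prop)).mul (hP _)).sub (hP _)

lemma exists_root (n k : ℕ) (hn : 2 ≤ n) (hk1 : 1 ≤ k) (hkn : k + 1 ≤ n) :
    ∃ y : ℝ, 0 < y ∧ y < 1 ∧ gf n k y = 0 := by
  obtain ⟨y₀, hy₀pos, hy₀1, hy₀gf⟩ := gf_pos_small n k hn hk1 hkn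
  have hone : gf n k 1 < 0 := gf_one_neg n k hk1 hkn
  have hsub := intermediate_value_Ioo' (le_of_lt hy₀1) (continuous_gf n k).continuousOn
  have h0mem : (0 : ℝ) ∈ Set.Ioo (gf n k 1) (gf n k y₀) := ⟨hone, hy₀gf⟩
  obtain ⟨y, hy, hgfy⟩ := hsub h0mem
  exact ⟨y, lt_trans hy₀pos hy.1, hy.2, hgfy⟩

lemma root_unique (n k : ℕ) (hn : 2 ≤ n) (hk1 : 1 ≤ k) (hkn : k + 1 ≤ n) :
    ∀ y₁ y₂ : ℝ, 0 < y₁ → 0 < y₂ → gf n k y₁ = 0 → gf n k y₂ = 0 → y₁ = y₂ := by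
  have hex : ∃ m, cc n k m < 0 := by
    by_contra hno
    push_neg at hno
    have h1 := hasSum_gf n k 1
    have : 0 ≤ gf n k 1 := by
      apply hasSum_le (fun m => ?_) hasSum_zero h1
      simpa using hno m
    linarith [gf_one_neg n k hk1 hkn]
  set m₁ := Nat.find hex with hm₁def
  have hm₁neg : cc n k m₁ < 0 := Nat.find_spec hex
  have hm₁big : n + 2 ≤ m₁ := by
    by_contra hlt
    push_neg at hlt
    rcases le_or_gt m₁ n with hcase | hcase
    · rw [cc_low n k m₁ hcase] at hm₁neg
      exact absurd hm₁neg (lt_irrefl 0)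
    · have : m₁ = n + 1 := by omega
      rw [this] at hm₁neg
      linarith [cc_top_pos n k hk1 hkn]
  set M := m₁ - 1 with hMdef
  have hm₁M : m₁ = M + 1 := by omega
  have hMn : n + 1 ≤ M := by omega
  have hlow : ∀ m, m ≤ M → 0 ≤ cc n k m := by
    intro m hm
    have := Nat.find_min hex (show m < m₁ from by omega)
    linarith [not_lt.mp this]
  have hhigh : ∀ m, M < m → cc n k m ≤ 0 := by
    have key : ∀ m, m₁ ≤ m → cc n k m ≤ 0 := by
      intro m hm'
      induction m, hm' using Nat.le_induction with
      | base => exact le_of_lt hm₁neg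
      | succ m hm ih => exact cc_prop n k hk1 hkn m (by omega) ih
    intro m hm
    exact key m (by omega)
  have cross : ∀ y₁ y₂ : ℝ, 0 < y₁ → y₁ < y₂ → gf n k y₂ * y₁ ^ M < gf n k y₁ * y₂ ^ M := by
    intro y₁ y₂ h1 h12
    have hy2 : 0 < y₂ := lt_trans h1 h12
    have hs := ((hasSum_gf n k y₁).mul_right (y₂ ^ M)).sub ((hasSum_gf n k y₂).mul_right (y₁ ^ M))
    have hterm : ∀ m, 0 ≤ cc n k m * y₁ ^ m * y₂ ^ M - cc n k m * y₂ ^ m * y₁ ^ M := by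
      intro m
      rcases le_or_gt m M with hm | hm
      · have hcc := hlow m hm
        have e1 : y₁ ^ M = y₁ ^ m * y₁ ^ (M - m) := by
          rw [← pow_add, show m + (M - m) = M from by omega]
        have e2 : y₂ ^ M = y₂ ^ m * y₂ ^ (M - m) := by
          rw [← pow_add, show m + (M - m) = M from by omega]
        have hpp : y₁ ^ (M - m) ≤ y₂ ^ (M - m) :=
          pow_le_pow_left₀ (le_of_lt h1) (le_of_lt h12) _
        have hfac : (0:ℝ) ≤ y₁ ^ m * y₂ ^ m := by positivity
        rw [e1, e2]
        have : y₂ ^ m * (y₁ ^ m * y₁ ^ (M - m)) ≤ y₁ ^ m * (y₂ ^ m * y₂ ^ (M - m)) := by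
          nlinarith [pow_pos h1 m, pow_pos hy2 m]
        nlinarith
      · have hcc := hhigh m hm
        have e1 : y₁ ^ m = y₁ ^ M * y₁ ^ (m - M) := by
          rw [← pow_add, show M + (m - M) = m from by omega]
        have e2 : y₂ ^ m = y₂ ^ M * y₂ ^ (m - M) := by
          rw [← pow_add, show M + (m - M) = m from by omega]
        have hpp : y₁ ^ (m - M) ≤ y₂ ^ (m - M) :=
          pow_le_pow_left₀ (le_of_lt h1) (le_of_lt h12) _
        rw [e1, e2]
        have hfac : (0:ℝ) ≤ y₁ ^ M * y₂ ^ M := by positivity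
        have : y₁ ^ M * y₁ ^ (m - M) * y₂ ^ M ≤ y₂ ^ M * y₂ ^ (m - M) * y₁ ^ M := by
          nlinarith [pow_pos h1 M, pow_pos hy2 M]
        nlinarith
    have hstrict : 0 < cc n k m₁ * y₁ ^ m₁ * y₂ ^ M - cc n k m₁ * y₂ ^ m₁ * y₁ ^ M := by
      have e1 : y₁ ^ m₁ = y₁ ^ M * y₁ := by rw [hm₁M, pow_succ]
      have e2 : y₂ ^ m₁ = y₂ ^ M * y₂ := by rw [hm₁M, pow_succ]
      rw [e1, e2]
      have hfac : (0:ℝ) < y₁ ^ M * y₂ ^ M := by positivity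
      have hkey : 0 < (y₁ ^ M * y₂ ^ M * (y₂ - y₁)) * (-(cc n k m₁)) :=
        mul_pos (mul_pos hfac (by linarith)) (by linarith)
      rw [show cc n k m₁ * (y₁ ^ M * y₁) * y₂ ^ M - cc n k m₁ * (y₂ ^ M * y₂) * y₁ ^ M
          = (y₁ ^ M * y₂ ^ M * (y₂ - y₁)) * (-(cc n k m₁)) from by ring]
      exact hkey
    have hle := le_hasSum hs m₁ (fun m _ => hterm m)
    linarith
  intro y₁ y₂ h1 h2 hg1 hg2
  rcases lt_trichotomy y₁ y₂ with hlt | heq | hgt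
  · have := cross y₁ y₂ h1 hlt
    rw [hg1, hg2] at this
    simp at this
  · exact heq
  · have := cross y₂ y₁ h2 hgt
    rw [hg1, hg2] at this
    simp at this

lemma h_to_gf (n k : ℕ) (x : ℝ) :
    Real.exp (2 * k * x) * S n ((n : ℝ) + k) x - S n ((n : ℝ) - k) x
      = (-1 : ℝ) ^ (n + 1) * (Real.exp (2 * k * x) * gf n k (-x)) := by
  rw [gf, S_eq_neg_P n ((n : ℝ) + k) x, S_eq_neg_P n ((n : ℝ) - k) x]
  have hexp : Real.exp (2 * k * x) * Real.exp (2 * (k : ℝ) * (-x)) = 1 := by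
    rw [← Real.exp_add]
    norm_num
  have e : ((-1 : ℝ) ^ (n + 1)) = -((-1 : ℝ) ^ n) := by rw [pow_succ]; ring
  rw [e]
  calc Real.exp (2 * k * x) * ((-1 : ℝ) ^ n * P n ((n : ℝ) + k) (-x))
        - (-1 : ℝ) ^ n * P n ((n : ℝ) - k) (-x)
      = -((-1 : ℝ) ^ n) * ((Real.exp (2 * k * x) * Real.exp (2 * (k : ℝ) * (-x)))
          * P n ((n : ℝ) - k) (-x)
          - Real.exp (2 * k * x) * P n ((n : ℝ) + k) (-x)) := by
        rw [hexp]; ring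
    _ = -((-1 : ℝ) ^ n) * (Real.exp (2 * k * x)
          * (Real.exp (2 * (k : ℝ) * (-x)) * P n ((n : ℝ) - k) (-x) - P n ((n : ℝ) + k) (-x))) := by
        ring

end S18

open S18

/-- For `n ≥ 2`, `1 ≤ k ≤ n-1`, the function
`h x = e^{2kx} ∑_{j=0}^n (-1)^{n-j} (n!/j!) (n+k)^{j-1} (n+k-j) x^j
     - ∑_{j=0}^n (-1)^{n-j} (n!/j!) (n-k)^{j-1} (n-k-j) x^j`
has exactly one nonzero real root `c₁`, and `-1 < c₁ < 0`. -/
theorem stmt_18 (n k : ℕ) (hn : 2 ≤ n) (hk1 : 1 ≤ k) (hk2 : k ≤ n - 1) (h : ℝ → ℝ)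
    (hh : ∀ x : ℝ, h x =
      Real.exp (2 * k * x) *
        (∑ j ∈ Finset.range (n + 1),
          (-1 : ℝ) ^ (n - j) * ((n.factorial : ℝ) / (j.factorial : ℝ)) *
            ((n : ℝ) + k) ^ ((j : ℤ) - 1) * ((n : ℝ) + k - j) * x ^ j)
      - ∑ j ∈ Finset.range (n + 1),
          (-1 : ℝ) ^ (n - j) * ((n.factorial : ℝ) / (j.factorial : ℝ)) *
            ((n : ℝ) - k) ^ ((j : ℤ) - 1) * ((n : ℝ) - k - j) * x ^ j) :
    ∃ c₁ : ℝ, (-1 < c₁ ∧ c₁ < 0) ∧ h c₁ = 0 ∧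
      ∀ x : ℝ, x ≠ 0 → h x = 0 → x = c₁ := by
  have hkn : k + 1 ≤ n := by omega
  have hApos : (0 : ℝ) < (n : ℝ) + k := by positivity
  have hBpos : (0 : ℝ) < (n : ℝ) - k := by
    have : (k : ℝ) + 1 ≤ (n : ℝ) := by exact_mod_cast hkn
    linarith
  have hS : ∀ x : ℝ, h x = Real.exp (2 * k * x) * S n ((n : ℝ) + k) x - S n ((n : ℝ) - k) x := by
    intro x
    rw [hh x]
    congr 1
    · congr 1
      rw [S]
      refine Finset.sum_congr rfl fun j _ => ?_
      rw [q, ← coeff_eq ((n : ℝ) + k) (ne_of_gt hApos) j]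
      ring
    · rw [S]
      refine Finset.sum_congr rfl fun j _ => ?_
      rw [q, ← coeff_eq ((n : ℝ) - k) (ne_of_gt hBpos) j]
      ring
  have hG : ∀ x : ℝ, h x = (-1 : ℝ) ^ (n + 1) * (Real.exp (2 * k * x) * gf n k (-x)) := by
    intro x
    rw [hS x, h_to_gf]
  obtain ⟨yc, hyc0, hyc1, hycroot⟩ := exists_root n k hn hk1 hkn
  refine ⟨-yc, ⟨by linarith, by linarith⟩, ?_, ?_⟩
  · rw [hG, neg_neg, hycroot, mul_zero, mul_zero]
  · intro x hx0 hxroot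
    rcases lt_trichotomy x 0 with hneg | hzero | hpos
    · have hgf : gf n k (-x) = 0 := by
        have hx : (-1 : ℝ) ^ (n + 1) * (Real.exp (2 * k * x) * gf n k (-x)) = 0 := by
          rw [← hG x]; exact hxroot
        rcases mul_eq_zero.mp hx with h' | h'
        · exact absurd h' (pow_ne_zero _ (by norm_num))
        · rcases mul_eq_zero.mp h' with h'' | h''
          · exact absurd h'' (Real.exp_ne_zero _)
          · exact h''
      have := root_unique n k hn hk1 hkn (-x) yc (by linarith) hyc0 hgf hycroot
      linarith
    · exact absurd hzero hx0
    · exfalso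
      have := h_pos n k hk1 hkn x hpos
      rw [← hS x] at this
      linarith [hxroot ▸ this]
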